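/- Let L = x_1,...,x_ℓ be a genlex ordering of X ⊆ {0,1}^n, let 1 ≤ i < ℓ, and let β := min B_L(x_i). Then B_L(x_i) \ {β} = B_L(x_{i+1}) \ {1,...,β}. -/
import Mathlib

def lamPos {n : ℕ} (x y : Fin n → Bool) : ℕ :=
  (Finset.univ.filter (fun i : Fin n => x i ≠ y i)).sup (fun i => (i : ℕ) + 1)

def hamming {n : ℕ} (x y : Fin n → Bool) : ℕ :=
  (Finset.univ.filter (fun i : Fin n => x i ≠ y i)).card

def sameSuffix {n : ℕ} (k : ℕ) (x y : Fin n → Bool) : Prop :=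
  ∀ i : Fin n, n - k ≤ (i : ℕ) → x i = y i

def IsOrdering {n : ℕ} (X : Finset (Fin n → Bool)) (L : List (Fin n → Bool)) : Prop :=
  L.Nodup ∧ ∀ x, x ∈ L ↔ x ∈ X

def IsGenlex {n : ℕ} (L : List (Fin n → Bool)) : Prop :=
  ∀ (k i j m : ℕ) (hij : i ≤ j) (hjm : j ≤ m) (hm : m < L.length),
    sameSuffix k (L.get ⟨i, by omega⟩) (L.get ⟨m, hm⟩) →
    sameSuffix k (L.get ⟨i, by omega⟩) (L.get ⟨j, by omega⟩)

def cost {n : ℕ} (L : List (Fin n → Bool)) : ℕ :=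
  (L.zipWith lamPos L.tail).sum

lemma lamPos_le_iff {n : ℕ} (x y : Fin n → Bool) (k : ℕ) :
    lamPos x y ≤ k ↔ ∀ i : Fin n, k ≤ (i : ℕ) → x i = y i := by
  unfold lamPos
  rw [Finset.sup_le_iff]
  constructor
  · intro h i hk
    by_contra hne
    have := h i (by simp [hne])
    omega
  · intro h i hi
    simp only [Finset.mem_filter, Finset.mem_univ, true_and] at hi
    by_contra hlt
    exact hi (h i (by omega))

lemma lamPos_comm {n : ℕ} (x y : Fin n → Bool) : lamPos x y = lamPos y x := by
  apply le_antisymm <;>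
  · rw [lamPos_le_iff]
    intro i hi
    exact ((lamPos_le_iff _ _ _).1 le_rfl i hi).symm

lemma lamPos_pos {n : ℕ} {x y : Fin n → Bool} (h : x ≠ y) : 1 ≤ lamPos x y := by
  by_contra hc
  push_neg at hc
  exact h (funext fun i => (lamPos_le_iff x y 0).1 (by omega) i (Nat.zero_le _))

lemma lamPos_le_n {n : ℕ} (x y : Fin n → Bool) : lamPos x y ≤ n := by
  apply Finset.sup_le
  intro i _
  omega

lemma lamPos_ultra {n : ℕ} {x y z : Fin n → Bool} (h : lamPos x y < lamPos y z) :
    lamPos x z = lamPos y z := by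
  have h1 : lamPos x z ≤ lamPos y z := by
    rw [lamPos_le_iff]
    intro i hi
    exact ((lamPos_le_iff x y _).1 (le_of_lt h) i hi).trans
      ((lamPos_le_iff y z _).1 le_rfl i hi)
  have h2 : lamPos y z ≤ max (lamPos x y) (lamPos x z) := by
    rw [lamPos_le_iff]
    intro i hi
    exact ((lamPos_le_iff x y _).1 (le_max_left _ _) i hi).symm.trans
      ((lamPos_le_iff x z _).1 (le_max_right _ _) i hi)
  omega

theorem branchings_update {n : ℕ} (X : Finset (Fin n → Bool))
    (L : List (Fin n → Bool)) (hL : IsOrdering X L) (hgen : IsGenlex L)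
    (i : ℕ) (hi : i + 1 < L.length) (β : ℕ)
    (hβ : IsLeast {v | ∃ j, ∃ hj : j < L.length, i < j ∧
      v = lamPos (L.get ⟨i, by omega⟩) (L.get ⟨j, hj⟩)} β) :
    {v | ∃ j, ∃ hj : j < L.length, i < j ∧
        v = lamPos (L.get ⟨i, by omega⟩) (L.get ⟨j, hj⟩)} \ {β}
    = {v | ∃ j, ∃ hj : j < L.length, i + 1 < j ∧
        v = lamPos (L.get ⟨i + 1, hi⟩) (L.get ⟨j, hj⟩)} \ Set.Icc 1 β := by
  have hii : i < L.length := by omega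
  set x := L.get ⟨i, hii⟩ with hx
  set y := L.get ⟨i + 1, hi⟩ with hy
  have hnd := hL.1
  have hne : ∀ (j : ℕ) (hj : j < L.length), i ≠ j → x ≠ L.get ⟨j, hj⟩ := by
    intro j hj hij h
    exact hij (Fin.mk.injEq .. ▸ (hnd.get_inj_iff.1 h))
  have hne' : ∀ (j : ℕ) (hj : j < L.length), i + 1 ≠ j → y ≠ L.get ⟨j, hj⟩ := by
    intro j hj hij h
    exact hij (Fin.mk.injEq .. ▸ (hnd.get_inj_iff.1 h))
  -- β ≥ 1
  obtain ⟨j0, hj0, hij0, hβeq⟩ := hβ.1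
  have hβ1 : 1 ≤ β := hβeq ▸ lamPos_pos (hne j0 hj0 (by omega))
  -- lamPos x y = β
  have hxyβ : lamPos x y = β := by
    have hβn : β ≤ n := hβeq ▸ lamPos_le_n _ _
    have hle : β ≤ lamPos x y := hβ.2 ⟨i + 1, hi, by omega, rfl⟩
    have hss : sameSuffix (n - β) x (L.get ⟨j0, hj0⟩) := by
      intro k hk
      exact (lamPos_le_iff x _ β).1 (le_of_eq hβeq.symm) k (by omega)
    have := hgen (n - β) i (i + 1) j0 (by omega) (by omega) hj0 hss
    have hle2 : lamPos x y ≤ β := by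
      rw [lamPos_le_iff]
      intro k hk
      exact this k (by omega)
    omega
  ext v
  simp only [Set.mem_diff, Set.mem_setOf_eq, Set.mem_singleton_iff, Set.mem_Icc, not_and,
    not_le]
  constructor
  · rintro ⟨⟨j, hj, hij, hveq⟩, hvβ⟩
    replace hveq : v = lamPos x (L.get ⟨j, hj⟩) := hveq
    subst hveq
    have hvge : β ≤ lamPos x (L.get ⟨j, hj⟩) := hβ.2 ⟨j, hj, hij, rfl⟩
    have hvgt : β < lamPos x (L.get ⟨j, hj⟩) := lt_of_le_of_ne hvge (Ne.symm hvβ)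
    have hji : i + 1 < j := by
      rcases Nat.lt_or_ge (i + 1) j with h | h
      · exact h
      · exfalso
        have : j = i + 1 := by omega
        subst this
        exact hvβ hxyβ
    have hyx : lamPos y x = β := lamPos_comm y x ▸ hxyβ
    have := lamPos_ultra (y := x) (x := y) (z := L.get ⟨j, hj⟩) (by omega)
    exact ⟨⟨j, hj, hji, this.symm⟩, fun _ => by omega⟩
  · rintro ⟨⟨j, hj, hij, rfl⟩, hvβ⟩
    have hv1 : 1 ≤ lamPos y (L.get ⟨j, hj⟩) := lamPos_pos (hne' j hj (by omega))
    have hβlt : β < lamPos y (L.get ⟨j, hj⟩) := hvβ hv1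
    have := lamPos_ultra (x := x) (y := y) (z := L.get ⟨j, hj⟩) (by omega)
    exact ⟨⟨j, hj, by omega, this.symm⟩, by omega⟩
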